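/- Let n ≥ 2, let 1 < α < 2, let κ : [-1,1] → [0,∞) be measurable with ∫_{S^{n-1}} κ(v·v') dv = 1 for each v' ∈ S^{n-1}, and let p be a path-length density with tail exponent α and coefficient d₀ > 0. With the scaling θ(ε) = ε^α, for every fixed ξ ∈ ℝⁿ \ {0} and v' ∈ S^{n-1}, the quantity Λ_ε(ξ,v') = ∫_{S^{n-1}} ∫₀^∞ κ(v'·v) p(s) (cos(ε (v·ξ) s) − 1)/θ(ε) ds dv converges as ε → 0 to −D̃₂ |ξ|^α, where D̃₂ = 2 d₀ ∫_{S^{n-1}} ∫₀^∞ κ(v·v') sin²(τ (v·e_ξ)/2) τ^{−(α+1)} dτ dv is finite and e_ξ = ξ/|ξ|. -/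

import Mathlib

open MeasureTheory Metric Filter Set
open scoped ENNReal

noncomputable section

/-- Euclidean space `ℝⁿ`. -/
abbrev Euc (n : ℕ) := EuclideanSpace ℝ (Fin n)

/-- The unit sphere `S^{n-1}` in `ℝⁿ`. -/
abbrev Sph (n : ℕ) := Metric.sphere (0 : Euc n) 1

/-- The normalized surface measure on the unit sphere (total mass `1`): the surface
measure divided by its total mass. -/
noncomputable def sphμ (n : ℕ) : Measure (Sph n) :=
  ((volume : Measure (Euc n)).toSphere Set.univ)⁻¹ • (volume : Measure (Euc n)).toSphere

/-- A path-length density: measurable, nonnegative, integrating to one on `(0,∞)`, with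
finite first moment. -/
def IsPathDensity (p : ℝ → ℝ) : Prop :=
  Measurable p ∧ (∀ s, 0 ≤ p s) ∧ (∫ s in Set.Ioi (0 : ℝ), p s = 1) ∧
    IntegrableOn (fun s => s * p s) (Set.Ioi (0 : ℝ))

/-- A normalized nonnegative angular kernel `κ` on `[-1,1]`:
`∫_{S^{n-1}} κ(v·v') dv = 1` for every `v'`. -/
def IsAngularKernel (n : ℕ) (κ : ℝ → ℝ) : Prop :=
  Measurable κ ∧ (∀ μ ∈ Set.Icc (-1 : ℝ) 1, 0 ≤ κ μ) ∧
    ∀ v' : Sph n, ∫ v, κ (inner ℝ (v : Euc n) (v' : Euc n)) ∂(sphμ n) = 1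

/-- The path-length density `p` has tail exponent `α` with coefficient `d₀`:
`p(s) = d₀ s^{−(α+1)}` for all `s > 1`. -/
def HasTailExponent (p : ℝ → ℝ) (α d₀ : ℝ) : Prop :=
  ∀ s : ℝ, 1 < s → p s = d₀ / s ^ (α + 1)

namespace LambdaAux

lemma cos_sub_one (x : ℝ) : Real.cos x - 1 = -(2 * Real.sin (x / 2) ^ 2) := by
  have h : Real.cos (2 * (x / 2)) = 2 * Real.cos (x / 2) ^ 2 - 1 := Real.cos_two_mul _
  have h2 : Real.sin (x / 2) ^ 2 + Real.cos (x / 2) ^ 2 = 1 := Real.sin_sq_add_cos_sq _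
  have hx : 2 * (x / 2) = x := by ring
  rw [hx] at h
  linarith

lemma abs_cos_sub_one_le_sq (x : ℝ) : |Real.cos x - 1| ≤ x ^ 2 / 2 := by
  rw [cos_sub_one, abs_neg, abs_of_nonneg (by positivity)]
  have := Real.sin_sq_le_sq (x := x / 2)
  nlinarith

lemma abs_cos_sub_one_le_two (x : ℝ) : |Real.cos x - 1| ≤ 2 := by
  have h1 := Real.neg_one_le_cos x
  have h2 := Real.cos_le_one x
  rw [abs_le]; constructor <;> linarith

lemma sin_sq_abs (x : ℝ) : Real.sin |x| ^ 2 = Real.sin x ^ 2 := by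
  rcases abs_cases x with ⟨h, _⟩ | ⟨h, _⟩ <;> rw [h] <;> simp [Real.sin_neg]

lemma contOn {f : ℝ → ℝ} (hf : Continuous f) (β : ℝ) :
    ContinuousOn (fun τ : ℝ => f τ / τ ^ β) (Ioi (0 : ℝ)) := by
  intro x hx
  have hx0 : (0 : ℝ) < x := hx
  exact (hf.continuousAt.continuousWithinAt.div
    ((Real.continuousAt_rpow_const x β (Or.inl hx0.ne')).continuousWithinAt)
    (Real.rpow_pos_of_pos hx0 β).ne')

lemma key_integrable {α : ℝ} (hα1 : 1 < α) (hα2 : α < 2) {f : ℝ → ℝ}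
    (hf : Continuous f) (C₁ C₂ : ℝ)
    (h1 : ∀ τ : ℝ, 0 < τ → |f τ| ≤ C₁ * τ ^ 2)
    (h2 : ∀ τ : ℝ, |f τ| ≤ C₂) :
    IntegrableOn (fun τ => f τ / τ ^ (α + 1)) (Ioi (0 : ℝ)) := by
  have hsplit : Ioi (0 : ℝ) = Ioc 0 1 ∪ Ioi 1 := (Ioc_union_Ioi_eq_Ioi zero_le_one).symm
  rw [hsplit]
  apply IntegrableOn.union
  · have hmeas : AEStronglyMeasurable (fun τ : ℝ => f τ / τ ^ (α + 1))
        (volume.restrict (Ioc (0:ℝ) 1)) :=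
      ((contOn hf (α + 1)).mono Ioc_subset_Ioi_self).aestronglyMeasurable measurableSet_Ioc
    refine Integrable.mono' (g := fun τ => C₁ * τ ^ (1 - α)) ?_ hmeas ?_
    · exact ((intervalIntegral.intervalIntegrable_rpow' (r := 1 - α)
        (by linarith)).1.const_mul C₁)
    · filter_upwards [ae_restrict_mem measurableSet_Ioc] with τ hτ
      have hτ0 : (0 : ℝ) < τ := hτ.1
      have hpow : (0 : ℝ) < τ ^ (α + 1) := Real.rpow_pos_of_pos hτ0 _
      rw [Real.norm_eq_abs, abs_div, abs_of_pos hpow]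
      have heq : C₁ * τ ^ (1 - α) = C₁ * τ ^ 2 / τ ^ (α + 1) := by
        rw [mul_div_assoc, ← Real.rpow_two, ← Real.rpow_sub hτ0]
        ring_nf
      rw [heq]
      gcongr
      exact h1 τ hτ0
  · refine Integrable.mono' (g := fun τ => C₂ * τ ^ (-(α + 1))) ?_
      (((contOn hf (α + 1)).mono (Ioi_subset_Ioi zero_le_one)).aestronglyMeasurable
        measurableSet_Ioi) ?_
    · exact (integrableOn_Ioi_rpow_of_lt (by linarith) one_pos).const_mul C₂
    · filter_upwards [ae_restrict_mem measurableSet_Ioi] with τ hτ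
      have hτ0 : (0 : ℝ) < τ := lt_trans one_pos hτ
      have hpow : (0 : ℝ) < τ ^ (α + 1) := Real.rpow_pos_of_pos hτ0 _
      rw [Real.norm_eq_abs, abs_div, abs_of_pos hpow, div_le_iff₀ hpow,
        Real.rpow_neg hτ0.le, mul_assoc, inv_mul_cancel₀ hpow.ne', mul_one]
      exact h2 τ


lemma scaling {α : ℝ} (f : ℝ → ℝ) {c : ℝ} (hc : 0 < c) {t : ℝ} (ht : 0 ≤ t) :
    ∫ τ in Ioi t, f (c * τ) / τ ^ (α + 1) =
      c ^ α * ∫ τ in Ioi (c * t), f τ / τ ^ (α + 1) := by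
  have hcβ : (0 : ℝ) < c ^ (α + 1) := Real.rpow_pos_of_pos hc _
  have key : ∫ τ in Ioi t, f (c * τ) / τ ^ (α + 1) =
      ∫ τ in Ioi t, c ^ (α + 1) * ((fun x => f x / x ^ (α + 1)) (c * τ)) := by
    refine setIntegral_congr_fun measurableSet_Ioi fun τ hτ => ?_
    have hτ0 : 0 < τ := lt_of_le_of_lt ht hτ
    have hmul : (c * τ) ^ (α + 1) = c ^ (α + 1) * τ ^ (α + 1) :=
      Real.mul_rpow hc.le hτ0.le
    simp only [hmul]
    field_simp
  rw [key, integral_const_mul,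
    integral_comp_mul_left_Ioi (fun x => f x / x ^ (α + 1)) t hc, smul_eq_mul, ← mul_assoc]
  congr 1
  rw [Real.rpow_add_one hc.ne' α]
  field_simp

lemma tendsto_integral_Ioi {g : ℝ → ℝ} (hg : IntegrableOn g (Ioi (0 : ℝ))) :
    Tendsto (fun c => ∫ τ in Ioi c, g τ) (nhdsWithin 0 (Ioi (0 : ℝ)))
      (nhds (∫ τ in Ioi (0 : ℝ), g τ)) := by
  have h0 : ∀ᶠ c in nhdsWithin 0 (Ioi (0 : ℝ)), c ∈ Ioi (0 : ℝ) :=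
    self_mem_nhdsWithin
  have heq : ∀ᶠ c in nhdsWithin 0 (Ioi (0 : ℝ)),
      (∫ τ, (Ioi c).indicator g τ ∂(volume.restrict (Ioi (0:ℝ)))) = ∫ τ in Ioi c, g τ := by
    filter_upwards [h0] with c hc
    rw [integral_indicator measurableSet_Ioi, Measure.restrict_restrict measurableSet_Ioi,
      Ioi_inter_Ioi, max_eq_left (le_of_lt hc)]
  refine Tendsto.congr' heq ?_
  refine tendsto_integral_filter_of_dominated_convergence (fun τ => |g τ|)
    (Eventually.of_forall fun c => hg.aestronglyMeasurable.indicator measurableSet_Ioi)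
    (Eventually.of_forall fun c => ?_) hg.abs ?_
  · refine Eventually.of_forall fun τ => ?_
    rw [Real.norm_eq_abs]
    classical
    by_cases h : τ ∈ Ioi c
    · rw [indicator_of_mem h]
    · rw [indicator_of_notMem h, abs_zero]; exact abs_nonneg _
  · filter_upwards [ae_restrict_mem measurableSet_Ioi] with τ hτ
    have : ∀ᶠ c in nhdsWithin 0 (Ioi (0 : ℝ)), (Ioi c).indicator g τ = g τ := by
      filter_upwards [Ioo_mem_nhdsGT_of_mem (Set.mem_Ico.2 ⟨le_refl (0:ℝ), hτ⟩)] with c hc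
      exact indicator_of_mem (mem_Ioi.2 hc.2) g
    exact Tendsto.congr' (this.mono fun c hc => hc.symm) tendsto_const_nhds

lemma integrable_of_integral_ne_zero {X : Type*} [MeasurableSpace X] {μ : Measure X}
    {f : X → ℝ} (h : (∫ x, f x ∂μ) ≠ 0) : Integrable f μ := by
  by_contra hc; exact h (integral_undef hc)


section PerV

variable {α d₀ : ℝ} {p : ℝ → ℝ}

lemma inner_integrable (hpm : Measurable p) (hpint : IntegrableOn p (Ioi (0:ℝ)))
    (ε a : ℝ) :
    IntegrableOn (fun s => p s * (Real.cos (ε * a * s) - 1)) (Ioi (0:ℝ)) := by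
  refine Integrable.mono' (g := fun s => |p s| * 2) ((hpint.abs).mul_const 2)
    ((hpm.mul (((Real.continuous_cos.comp
      ((continuous_const.mul continuous_id))).sub continuous_const).measurable)).aestronglyMeasurable) ?_
  refine Eventually.of_forall fun s => ?_
  rw [Real.norm_eq_abs, abs_mul]
  exact mul_le_mul_of_nonneg_left (abs_cos_sub_one_le_two _) (abs_nonneg _)

lemma psi_eq (hpm : Measurable p) (hpint : IntegrableOn p (Ioi (0:ℝ)))
    (htail : ∀ s : ℝ, 1 < s → p s = d₀ / s ^ (α + 1))
    {ε a : ℝ} (hε : 0 < ε) (ha : a ≠ 0) :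
    ∫ s in Ioi (0:ℝ), p s * (Real.cos (ε * a * s) - 1) / ε ^ α =
      (∫ s in Ioc (0:ℝ) 1, p s * (Real.cos (ε * a * s) - 1)) / ε ^ α +
      d₀ * |a| ^ α * ∫ τ in Ioi (ε * |a|), (Real.cos τ - 1) / τ ^ (α + 1) := by
  have hI := inner_integrable hpm hpint ε a
  have h1 : IntegrableOn (fun s => p s * (Real.cos (ε*a*s) - 1)) (Ioc (0:ℝ) 1) :=
    hI.mono_set Ioc_subset_Ioi_self
  have h2 : IntegrableOn (fun s => p s * (Real.cos (ε*a*s) - 1)) (Ioi (1:ℝ)) :=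
    hI.mono_set (Ioi_subset_Ioi zero_le_one)
  have hca : 0 < ε * |a| := mul_pos hε (abs_pos.2 ha)
  have hεα : (0:ℝ) < ε ^ α := Real.rpow_pos_of_pos hε α
  have htr : ∫ s in Ioi (1:ℝ), p s * (Real.cos (ε*a*s) - 1)
      = ∫ s in Ioi (1:ℝ), d₀ * ((Real.cos (ε * |a| * s) - 1) / s ^ (α+1)) := by
    refine setIntegral_congr_fun measurableSet_Ioi fun s hs => ?_
    have hs1 : (1:ℝ) < s := hs
    have hs0 : (0:ℝ) < s := lt_trans one_pos hs1
    have habs : ε * |a| * s = |ε * a * s| := by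
      rw [abs_mul, abs_mul, abs_of_pos hε, abs_of_pos hs0]
    rw [htail s hs1, habs, Real.cos_abs]
    ring
  have htail2 : (∫ s in Ioi (1:ℝ), p s * (Real.cos (ε*a*s) - 1)) =
      d₀ * ((ε*|a|)^α * ∫ τ in Ioi (ε*|a|), (Real.cos τ - 1)/τ^(α+1)) := by
    rw [htr, integral_const_mul]
    refine congrArg (fun z => d₀ * z) ?_
    have h := scaling (α := α) (fun x => Real.cos x - 1) hca zero_le_one
    rw [mul_one] at h
    exact h
  rw [integral_div,
    show Ioi (0:ℝ) = Ioc 0 1 ∪ Ioi 1 from (Ioc_union_Ioi_eq_Ioi zero_le_one).symm,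
    setIntegral_union (Ioc_disjoint_Ioi le_rfl) measurableSet_Ioi h1 h2, add_div, htail2,
    Real.mul_rpow hε.le (abs_nonneg a)]
  congr 1
  field_simp

lemma T1_bound (hpnn : ∀ s, 0 ≤ p s) (hpint : IntegrableOn p (Ioi (0:ℝ)))
    (hpone : ∫ s in Ioi (0:ℝ), p s = 1) (ε a : ℝ) :
    |∫ s in Ioc (0:ℝ) 1, p s * (Real.cos (ε * a * s) - 1)| ≤ ε ^ 2 * a ^ 2 / 2 := by
  have hb : ∀ᵐ s ∂(volume.restrict (Ioc (0:ℝ) 1)),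
      ‖p s * (Real.cos (ε * a * s) - 1)‖ ≤ ε ^ 2 * a ^ 2 / 2 * p s := by
    filter_upwards [ae_restrict_mem measurableSet_Ioc] with s hs
    rw [Real.norm_eq_abs, abs_mul, abs_of_nonneg (hpnn s)]
    have h1 : |Real.cos (ε*a*s) - 1| ≤ (ε*a*s)^2/2 := abs_cos_sub_one_le_sq _
    have h2 : (ε*a*s)^2/2 ≤ ε^2*a^2/2 := by
      have hs2 : s^2 ≤ 1 := by nlinarith [hs.1.le, hs.2]
      nlinarith [sq_nonneg (ε*a)]
    calc p s * |Real.cos (ε*a*s) - 1| ≤ p s * (ε^2*a^2/2) :=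
          mul_le_mul_of_nonneg_left (h1.trans h2) (hpnn s)
      _ = ε^2*a^2/2 * p s := by ring
  have hInt : Integrable (fun s => ε^2*a^2/2 * p s) (volume.restrict (Ioc (0:ℝ) 1)) :=
    (hpint.mono_set Ioc_subset_Ioi_self).const_mul _
  have hkey := norm_integral_le_of_norm_le hInt hb
  rw [Real.norm_eq_abs] at hkey
  refine hkey.trans ?_
  rw [integral_const_mul]
  have hple : ∫ s in Ioc (0:ℝ) 1, p s ≤ 1 := by
    rw [← hpone]
    exact setIntegral_mono_set hpint (Eventually.of_forall hpnn)
      (HasSubset.Subset.eventuallyLE Ioc_subset_Ioi_self)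
  have hc : (0:ℝ) ≤ ε^2*a^2/2 := by positivity
  calc ε^2*a^2/2 * ∫ s in Ioc (0:ℝ) 1, p s ≤ ε^2*a^2/2 * 1 :=
        mul_le_mul_of_nonneg_left hple hc
    _ = ε^2*a^2/2 := mul_one _

lemma cos_integrable (hα1 : 1 < α) (hα2 : α < 2) :
    IntegrableOn (fun τ => (Real.cos τ - 1) / τ ^ (α + 1)) (Ioi (0:ℝ)) :=
  key_integrable hα1 hα2 (Real.continuous_cos.sub continuous_const) (1/2) 2
    (fun τ _ => by have := abs_cos_sub_one_le_sq τ; nlinarith)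
    abs_cos_sub_one_le_two

lemma psi_tendsto (hα1 : 1 < α) (hα2 : α < 2) (hpm : Measurable p)
    (hpnn : ∀ s, 0 ≤ p s) (hpint : IntegrableOn p (Ioi (0:ℝ)))
    (hpone : ∫ s in Ioi (0:ℝ), p s = 1)
    (htail : ∀ s : ℝ, 1 < s → p s = d₀ / s ^ (α + 1)) (a : ℝ) :
    Tendsto (fun ε : ℝ => ∫ s in Ioi (0:ℝ), p s * (Real.cos (ε * a * s) - 1) / ε ^ α)
      (nhdsWithin 0 (Ioi (0:ℝ)))
      (nhds (d₀ * |a| ^ α * ∫ τ in Ioi (0:ℝ), (Real.cos τ - 1) / τ ^ (α + 1))) := by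
  rcases eq_or_ne a 0 with rfl | ha
  · simp only [mul_zero, zero_mul, Real.cos_zero, sub_self, zero_div, integral_zero,
      abs_zero, Real.zero_rpow (show α ≠ 0 by linarith), mul_zero, zero_mul]
    exact tendsto_const_nhds
  · have hg := cos_integrable hα1 hα2
    have hmap : Tendsto (fun ε : ℝ => ε * |a|) (nhdsWithin 0 (Ioi (0:ℝ)))
        (nhdsWithin 0 (Ioi (0:ℝ))) := by
      rw [tendsto_nhdsWithin_iff]
      constructor
      · have h : Tendsto (fun ε : ℝ => ε * |a|) (nhds 0) (nhds (0 * |a|)) :=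
          (continuous_mul_right |a|).tendsto 0
        rw [zero_mul] at h
        exact h.mono_left nhdsWithin_le_nhds
      · filter_upwards [self_mem_nhdsWithin] with ε (hε : 0 < ε)
        exact mul_pos hε (abs_pos.2 ha)
    have hT2 : Tendsto (fun ε : ℝ => d₀ * |a| ^ α *
        ∫ τ in Ioi (ε * |a|), (Real.cos τ - 1) / τ ^ (α + 1))
        (nhdsWithin 0 (Ioi (0:ℝ)))
        (nhds (d₀ * |a| ^ α * ∫ τ in Ioi (0:ℝ), (Real.cos τ - 1) / τ ^ (α + 1))) :=
      ((tendsto_integral_Ioi hg).comp hmap).const_mul _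
    have hT1 : Tendsto (fun ε : ℝ =>
        (∫ s in Ioc (0:ℝ) 1, p s * (Real.cos (ε * a * s) - 1)) / ε ^ α)
        (nhdsWithin 0 (Ioi (0:ℝ))) (nhds 0) := by
      have htend : Tendsto (fun ε : ℝ => ε ^ (2 - α) * (a^2/2)) (nhdsWithin 0 (Ioi (0:ℝ)))
          (nhds 0) := by
        have h2α : Tendsto (fun ε : ℝ => ε ^ (2 - α)) (nhds 0) (nhds 0) := by
          have hc := (Real.continuousAt_rpow_const 0 (2 - α) (Or.inr (by linarith))).tendsto
          simpa [Real.zero_rpow (show (2:ℝ) - α ≠ 0 by linarith)] using hc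
        have h := (h2α.mono_left (nhdsWithin_le_nhds (s := Ioi (0:ℝ)))).mul_const (a^2/2)
        simpa using h
      refine squeeze_zero_norm' ?_ htend
      · filter_upwards [self_mem_nhdsWithin] with ε (hε : 0 < ε)
        have hεα : (0:ℝ) < ε ^ α := Real.rpow_pos_of_pos hε α
        rw [Real.norm_eq_abs, abs_div, abs_of_pos hεα, div_le_iff₀ hεα]
        refine (T1_bound hpnn hpint hpone ε a).trans (le_of_eq ?_)
        have hsplit2 : ε ^ (2 - α) * ε ^ α = ε ^ 2 := by
          rw [← Real.rpow_add hε, ← Real.rpow_two]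
          norm_num
        rw [← hsplit2]
        ring
    have hsum := hT1.add hT2
    rw [zero_add] at hsum
    refine Tendsto.congr' ?_ hsum
    filter_upwards [self_mem_nhdsWithin] with ε (hε : 0 < ε)
    exact (psi_eq hpm hpint htail hε ha).symm

lemma psi_bound (hα1 : 1 < α) (hα2 : α < 2) (hpm : Measurable p)
    (hpnn : ∀ s, 0 ≤ p s) (hpint : IntegrableOn p (Ioi (0:ℝ)))
    (hpone : ∫ s in Ioi (0:ℝ), p s = 1) (hd₀ : 0 < d₀)
    (htail : ∀ s : ℝ, 1 < s → p s = d₀ / s ^ (α + 1))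
    {ε : ℝ} (hε : ε ∈ Ioc (0:ℝ) 1) (a : ℝ) :
    |∫ s in Ioi (0:ℝ), p s * (Real.cos (ε * a * s) - 1) / ε ^ α|
      ≤ a ^ 2 / 2 + d₀ * |a| ^ α *
          ∫ τ in Ioi (0:ℝ), |(Real.cos τ - 1) / τ ^ (α + 1)| := by
  have hCg : (0:ℝ) ≤ ∫ τ in Ioi (0:ℝ), |(Real.cos τ - 1) / τ ^ (α + 1)| :=
    integral_nonneg fun τ => abs_nonneg _
  rcases eq_or_ne a 0 with rfl | ha
  · simp only [mul_zero, zero_mul, Real.cos_zero, sub_self, zero_div, integral_zero,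
      abs_zero, Real.zero_rpow (show α ≠ 0 by linarith)]
    positivity
  · rw [psi_eq hpm hpint htail hε.1 ha]
    refine (abs_add_le _ _).trans (add_le_add ?_ ?_)
    · have h1 := T1_bound hpnn hpint hpone ε a
      have hεα : (0:ℝ) < ε ^ α := Real.rpow_pos_of_pos hε.1 α
      rw [abs_div, abs_of_pos hεα, div_le_iff₀ hεα]
      refine h1.trans ?_
      have h2 : ε ^ (2:ℝ) ≤ ε ^ α := Real.rpow_le_rpow_of_exponent_ge hε.1 hε.2 (by linarith)
      have h3 : ε ^ 2 ≤ ε ^ α := by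
        rw [← Real.rpow_two]; exact h2
      have h4 := mul_le_mul_of_nonneg_left h3 (sq_nonneg a)
      nlinarith [h4]
    · have hca : 0 < ε * |a| := mul_pos hε.1 (abs_pos.2 ha)
      have hIa : |∫ τ in Ioi (ε*|a|), (Real.cos τ - 1) / τ ^ (α + 1)|
          ≤ ∫ τ in Ioi (0:ℝ), |(Real.cos τ - 1) / τ ^ (α + 1)| := by
        have habs : |∫ τ in Ioi (ε*|a|), (Real.cos τ - 1) / τ ^ (α + 1)|
            ≤ ∫ τ in Ioi (ε*|a|), |(Real.cos τ - 1) / τ ^ (α + 1)| := by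
          have h0 := norm_integral_le_integral_norm (μ := volume.restrict (Ioi (ε*|a|)))
            (f := fun τ => (Real.cos τ - 1) / τ ^ (α + 1))
          simp only [Real.norm_eq_abs] at h0
          exact h0
        refine habs.trans ?_
        exact setIntegral_mono_set (cos_integrable hα1 hα2).abs
          (Eventually.of_forall fun τ => abs_nonneg _)
          (HasSubset.Subset.eventuallyLE (Ioi_subset_Ioi hca.le))
      rw [abs_mul, abs_mul, abs_of_pos hd₀, abs_of_nonneg (Real.rpow_nonneg (abs_nonneg a) α)]
      exact mul_le_mul_of_nonneg_left hIa (by positivity)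

lemma J_eq (hα0 : α ≠ 0) (b : ℝ) :
    ∫ τ in Ioi (0:ℝ), Real.sin (τ * b / 2) ^ 2 / τ ^ (α + 1)
      = |b| ^ α * ∫ τ in Ioi (0:ℝ), Real.sin (τ / 2) ^ 2 / τ ^ (α + 1) := by
  rcases eq_or_ne b 0 with rfl | hb
  · simp [Real.zero_rpow hα0]
  · have hcongr : ∫ τ in Ioi (0:ℝ), Real.sin (τ * b / 2) ^ 2 / τ ^ (α + 1)
        = ∫ τ in Ioi (0:ℝ), (fun x => Real.sin (x / 2) ^ 2) (|b| * τ) / τ ^ (α + 1) := by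
      refine setIntegral_congr_fun measurableSet_Ioi fun τ hτ => ?_
      have hτ0 : (0:ℝ) < τ := hτ
      have habs : |b| * τ / 2 = |τ * b / 2| := by
        rw [abs_div, abs_mul, abs_of_pos hτ0, abs_two]
        ring
      simp only []
      rw [habs, sin_sq_abs]
    have h := scaling (α := α) (fun x => Real.sin (x / 2) ^ 2) (abs_pos.2 hb)
      (le_refl (0:ℝ))
    rw [mul_zero] at h
    rw [hcongr]
    exact h

lemma cos_to_sin (hα1 : 1 < α) (hα2 : α < 2) :
    ∫ τ in Ioi (0:ℝ), (Real.cos τ - 1) / τ ^ (α + 1)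
      = -2 * ∫ τ in Ioi (0:ℝ), Real.sin (τ / 2) ^ 2 / τ ^ (α + 1) := by
  rw [← integral_const_mul]
  refine setIntegral_congr_fun measurableSet_Ioi fun τ _ => ?_
  rw [cos_sub_one]
  ring

end PerV
end LambdaAux


open LambdaAux in
/-- Proposition 4.5 (b2): pointwise limit `Λ_ε → −D̃₂ |ξ|^α` in the
heavy-tail case `1 < α < 2`, `θ(ε) = ε^α`. -/
theorem lambda_limit_heavy_tail
    (n : ℕ) (hn : 2 ≤ n) (α : ℝ) (hα : 1 < α ∧ α < 2)
    (κ : ℝ → ℝ) (hκ : IsAngularKernel n κ)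
    (p : ℝ → ℝ) (hp : IsPathDensity p)
    (d₀ : ℝ) (hd₀ : 0 < d₀) (htail : HasTailExponent p α d₀)
    (ξ : Euc n) (hξ : ξ ≠ 0) (v' : Sph n) :
    (∀ v : Sph n, IntegrableOn
        (fun τ => Real.sin (τ * inner ℝ (v : Euc n) (‖ξ‖⁻¹ • ξ) / 2) ^ 2 / τ ^ (α + 1))
        (Set.Ioi (0 : ℝ))) ∧
    Tendsto
      (fun ε : ℝ => ∫ v : Sph n, ∫ s in Set.Ioi (0 : ℝ),
        κ (inner ℝ (v' : Euc n) (v : Euc n)) * p s *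
          (Real.cos (ε * inner ℝ (v : Euc n) ξ * s) - 1) / ε ^ α ∂volume ∂(sphμ n))
      (nhdsWithin 0 (Set.Ioi (0 : ℝ)))
      (nhds (-(2 * d₀ *
        ∫ v : Sph n, κ (inner ℝ (v : Euc n) (v' : Euc n)) *
          ∫ τ in Set.Ioi (0 : ℝ),
            Real.sin (τ * inner ℝ (v : Euc n) (‖ξ‖⁻¹ • ξ) / 2) ^ 2 / τ ^ (α + 1) ∂volume
          ∂(sphμ n)) * ‖ξ‖ ^ α)) := by
  obtain ⟨hα1, hα2⟩ := hα
  obtain ⟨hκm, hκnn, hκone⟩ := hκ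
  obtain ⟨hpm, hpnn, hpone, _⟩ := hp
  have hα0 : α ≠ 0 := by linarith
  have hξn : (0:ℝ) < ‖ξ‖ := norm_pos_iff.2 hξ
  have hpint : IntegrableOn p (Ioi (0:ℝ)) :=
    integrable_of_integral_ne_zero (by rw [hpone]; norm_num)
  -- part 1 : integrability
  have hJint : ∀ v : Sph n, IntegrableOn
      (fun τ => Real.sin (τ * inner ℝ (v : Euc n) (‖ξ‖⁻¹ • ξ) / 2) ^ 2 / τ ^ (α + 1))
      (Set.Ioi (0 : ℝ)) := by
    intro v
    set b : ℝ := inner ℝ (v : Euc n) (‖ξ‖⁻¹ • ξ) with hb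
    refine key_integrable hα1 hα2
      (f := fun τ => Real.sin (τ * b / 2) ^ 2)
      ((Real.continuous_sin.comp ((continuous_id.mul continuous_const).div_const 2)).pow 2)
      (b ^ 2 / 4) 1 ?_ ?_
    · intro τ _
      rw [abs_of_nonneg (sq_nonneg _)]
      have h := Real.sin_sq_le_sq (x := τ * b / 2)
      nlinarith
    · intro τ
      rw [abs_of_nonneg (sq_nonneg _)]
      exact Real.sin_sq_le_one _
  refine ⟨hJint, ?_⟩
  -- notation
  set l := nhdsWithin (0:ℝ) (Set.Ioi 0) with hl
  set K : Sph n → ℝ := fun v => κ (inner ℝ (v' : Euc n) (v : Euc n)) with hK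
  set A : Sph n → ℝ := fun v => inner ℝ (v : Euc n) ξ with hA
  set J : Sph n → ℝ := fun v => ∫ τ in Set.Ioi (0:ℝ),
      Real.sin (τ * inner ℝ (v : Euc n) (‖ξ‖⁻¹ • ξ) / 2) ^ 2 / τ ^ (α + 1) with hJ
  set G : ℝ := ∫ τ in Ioi (0:ℝ), (Real.cos τ - 1) / τ ^ (α + 1) with hG
  set Cg : ℝ := ∫ τ in Ioi (0:ℝ), |(Real.cos τ - 1) / τ ^ (α + 1)| with hCg
  set Ch : ℝ := ∫ τ in Ioi (0:ℝ), Real.sin (τ / 2) ^ 2 / τ ^ (α + 1) with hCh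
  have hCgnn : (0:ℝ) ≤ Cg := integral_nonneg fun τ => abs_nonneg _
  -- basic facts
  have hKnn : ∀ v : Sph n, 0 ≤ K v := by
    intro v
    refine hκnn _ ?_
    have h := abs_real_inner_le_norm (v' : Euc n) (v : Euc n)
    rw [norm_eq_of_mem_sphere v', norm_eq_of_mem_sphere v, one_mul] at h
    exact abs_le.1 h
  have hAle : ∀ v : Sph n, |A v| ≤ ‖ξ‖ := by
    intro v
    have h := abs_real_inner_le_norm (v : Euc n) ξ
    rwa [norm_eq_of_mem_sphere v, one_mul] at h
  have hKint : Integrable K (sphμ n) := by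
    have h := integrable_of_integral_ne_zero (f := fun v : Sph n =>
      κ (inner ℝ (v : Euc n) (v' : Euc n))) (μ := sphμ n) (by rw [hκone v']; norm_num)
    refine h.congr (Eventually.of_forall fun v => ?_)
    simp only [hK, real_inner_comm]
  have hKcont : Continuous fun v : Sph n => (inner ℝ (v' : Euc n) (v : Euc n) : ℝ) :=
    Continuous.inner continuous_const continuous_subtype_val
  have hAcont : Continuous A := Continuous.inner continuous_subtype_val continuous_const
  -- pull out κ from the inner integral
  have hFeq : ∀ (ε : ℝ) (v : Sph n),
      (∫ s in Ioi (0:ℝ), K v * p s * (Real.cos (ε * A v * s) - 1) / ε ^ α)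
        = K v * ∫ s in Ioi (0:ℝ), p s * (Real.cos (ε * A v * s) - 1) / ε ^ α := by
    intro ε v
    rw [← integral_const_mul]
    refine setIntegral_congr_fun measurableSet_Ioi fun s _ => ?_
    ring
  -- DCT
  have hmain : Tendsto
      (fun ε : ℝ => ∫ v : Sph n, ∫ s in Set.Ioi (0 : ℝ),
        K v * p s * (Real.cos (ε * A v * s) - 1) / ε ^ α ∂volume ∂(sphμ n))
      l (nhds (∫ v : Sph n, K v * (d₀ * |A v| ^ α * G) ∂(sphμ n))) := by
    refine tendsto_integral_filter_of_dominated_convergence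
      (fun v => K v * (‖ξ‖ ^ 2 / 2 + d₀ * ‖ξ‖ ^ α * Cg)) ?_ ?_ (hKint.mul_const _) ?_
    · refine Eventually.of_forall fun ε => ?_
      have hsm : StronglyMeasurable fun q : Sph n × ℝ =>
          K q.1 * p q.2 * (Real.cos (ε * A q.1 * q.2) - 1) / ε ^ α := by
        refine Measurable.stronglyMeasurable ?_
        refine Measurable.div_const ?_ _
        refine Measurable.mul ?_ ?_
        · exact ((hκm.comp hKcont.measurable).comp measurable_fst).mul
            (hpm.comp measurable_snd)
        · exact ((Real.continuous_cos.comp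
            (((continuous_const.mul (hAcont.comp continuous_fst)).mul
              continuous_snd))).sub continuous_const).measurable
      exact (hsm.integral_prod_right').aestronglyMeasurable
    · refine eventually_of_mem (Ioc_mem_nhdsGT_of_mem ⟨le_refl (0:ℝ), one_pos⟩) ?_
      intro ε hε
      refine Eventually.of_forall fun v => ?_
      rw [hFeq ε v, Real.norm_eq_abs, abs_mul, abs_of_nonneg (hKnn v)]
      refine mul_le_mul_of_nonneg_left ?_ (hKnn v)
      refine (psi_bound hα1 hα2 hpm hpnn hpint hpone hd₀ htail hε (A v)).trans ?_
      have h1 : (A v) ^ 2 / 2 ≤ ‖ξ‖ ^ 2 / 2 := by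
        have := hAle v
        have h2 : (A v) ^ 2 ≤ ‖ξ‖ ^ 2 := by
          rw [← sq_abs (A v)]
          exact pow_le_pow_left₀ (abs_nonneg _) this 2
        linarith
      have h2 : |A v| ^ α ≤ ‖ξ‖ ^ α :=
        Real.rpow_le_rpow (abs_nonneg _) (hAle v) (by linarith)
      have h3 : d₀ * |A v| ^ α * Cg ≤ d₀ * ‖ξ‖ ^ α * Cg := by
        refine mul_le_mul_of_nonneg_right ?_ hCgnn
        exact mul_le_mul_of_nonneg_left h2 hd₀.le
      linarith
    · refine Eventually.of_forall fun v => ?_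
      have h := (psi_tendsto hα1 hα2 hpm hpnn hpint hpone htail (A v)).const_mul (K v)
      refine Tendsto.congr (fun ε => (hFeq ε v).symm) ?_
      exact h
  -- compute the limit value
  have hval : (∫ v : Sph n, K v * (d₀ * |A v| ^ α * G) ∂(sphμ n))
      = -(2 * d₀ *
        ∫ v : Sph n, κ (inner ℝ (v : Euc n) (v' : Euc n)) * J v ∂(sphμ n)) * ‖ξ‖ ^ α := by
    have hpt : ∀ v : Sph n, K v * (d₀ * |A v| ^ α * G)
        = (-(2 * d₀) * ‖ξ‖ ^ α) * (κ (inner ℝ (v : Euc n) (v' : Euc n)) * J v) := by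
      intro v
      have hb : A v = ‖ξ‖ * inner ℝ (v : Euc n) (‖ξ‖⁻¹ • ξ) := by
        rw [real_inner_smul_right, ← mul_assoc, mul_inv_cancel₀ hξn.ne', one_mul]
      have habs : |A v| ^ α = ‖ξ‖ ^ α * |inner ℝ (v : Euc n) (‖ξ‖⁻¹ • ξ)| ^ α := by
        rw [hb, abs_mul, abs_of_pos hξn, Real.mul_rpow hξn.le (abs_nonneg _)]
      have hJv : J v = |(inner ℝ (v : Euc n) (‖ξ‖⁻¹ • ξ) : ℝ)| ^ α * Ch := by
        rw [hJ, hCh]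
        exact J_eq hα0 _
      have hGv : G = -2 * Ch := by rw [hG, hCh]; exact cos_to_sin hα1 hα2
      have hKv : K v = κ (inner ℝ (v : Euc n) (v' : Euc n)) := by
        simp only [hK, real_inner_comm]
      rw [hKv, habs, hJv, hGv]
      ring
    calc (∫ v : Sph n, K v * (d₀ * |A v| ^ α * G) ∂(sphμ n))
        = ∫ v : Sph n, (-(2 * d₀) * ‖ξ‖ ^ α) *
            (κ (inner ℝ (v : Euc n) (v' : Euc n)) * J v) ∂(sphμ n) := by
          exact integral_congr_ae (Eventually.of_forall hpt)
      _ = (-(2 * d₀) * ‖ξ‖ ^ α) *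
            ∫ v : Sph n, κ (inner ℝ (v : Euc n) (v' : Euc n)) * J v ∂(sphμ n) :=
          integral_const_mul _ _
      _ = -(2 * d₀ *
            ∫ v : Sph n, κ (inner ℝ (v : Euc n) (v' : Euc n)) * J v ∂(sphμ n)) * ‖ξ‖ ^ α := by
          ring
  rw [hval] at hmain
  exact hmain
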